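/- Let X and Y be Banach spaces, x₀ ∈ X, δ > 0, and let Φ be a continuously differentiable map from an open set containing the closed ball B̄(x₀, δ) to Y. Assume: (i) the derivative DΦ is Lipschitz on B̄(x₀, δ); (ii) for every x ∈ B̄(x₀, δ), DΦ(x) is a continuous linear isomorphism from X to Y; (iii) there is M with ‖DΦ(x)⁻¹‖ ≤ M for all x ∈ B̄(x₀, δ); and (iv) ‖DΦ(x)⁻¹(Φ(x₀))‖ ≤ δ for every x ∈ B̄(x₀, δ). Then there exists x* ∈ B̄(x₀, δ) with Φ(x*) = 0. -/

import Mathlib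

/-- Continuation-method existence principle: let `Φ` be continuously
differentiable near the closed ball `B̄(x₀, δ)` with derivative `Φ' x` a linear
isomorphism at each point, Lipschitz in `x`, with uniformly bounded inverse, and
suppose `‖Φ'(x)⁻¹ Φ(x₀)‖ ≤ δ` on the ball.  Then `Φ` has a zero in the ball. -/
theorem continuation_method_zero
    {X Y : Type*} [NormedAddCommGroup X] [NormedSpace ℝ X] [CompleteSpace X]
    [NormedAddCommGroup Y] [NormedSpace ℝ Y] [CompleteSpace Y]
    (x₀ : X) (δ : ℝ) (hδ : 0 < δ) (Φ : X → Y) (Φ' : X → X ≃L[ℝ] Y)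
    (hderiv : ∀ x ∈ Metric.closedBall x₀ δ, HasFDerivAt Φ (Φ' x : X →L[ℝ] Y) x)
    (L : ℝ)
    (hlip : ∀ x ∈ Metric.closedBall x₀ δ, ∀ y ∈ Metric.closedBall x₀ δ,
      ‖(Φ' x : X →L[ℝ] Y) - (Φ' y : X →L[ℝ] Y)‖ ≤ L * ‖x - y‖)
    (M : ℝ)
    (hM : ∀ x ∈ Metric.closedBall x₀ δ, ‖((Φ' x).symm : Y →L[ℝ] X)‖ ≤ M)
    (hsmall : ∀ x ∈ Metric.closedBall x₀ δ, ‖(Φ' x).symm (Φ x₀)‖ ≤ δ) :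
    ∃ x ∈ Metric.closedBall x₀ δ, Φ x = 0 := by
  classical
  set F : X → X := fun x => -((Φ' x).symm (Φ x₀)) with hF
  -- Lipschitz constant for F on the ball
  set K : NNReal := (M * L * δ).toNNReal with hK
  have hx₀mem : x₀ ∈ Metric.closedBall x₀ δ := Metric.mem_closedBall_self hδ.le
  have hFlip : LipschitzOnWith K F (Metric.closedBall x₀ δ) := by
    rw [lipschitzOnWith_iff_dist_le_mul]
    intro x hx y hy
    rw [dist_eq_norm, dist_eq_norm]
    have key : F x - F y
        = ((Φ' x).symm : Y →L[ℝ] X)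
            (((Φ' x : X →L[ℝ] Y) - (Φ' y : X →L[ℝ] Y)) ((Φ' y).symm (Φ x₀))) := by
      simp only [hF, ContinuousLinearMap.sub_apply, map_sub, ContinuousLinearEquiv.coe_coe,
        ContinuousLinearEquiv.symm_apply_apply, ContinuousLinearEquiv.apply_symm_apply]
      abel
    calc ‖F x - F y‖
        ≤ ‖((Φ' x).symm : Y →L[ℝ] X)‖
          * ‖((Φ' x : X →L[ℝ] Y) - (Φ' y : X →L[ℝ] Y)) ((Φ' y).symm (Φ x₀))‖ := by
          rw [key]; exact ((Φ' x).symm : Y →L[ℝ] X).le_opNorm _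
      _ ≤ M * (‖(Φ' x : X →L[ℝ] Y) - (Φ' y : X →L[ℝ] Y)‖ * ‖(Φ' y).symm (Φ x₀)‖) := by
          gcongr
          · exact (norm_nonneg _).trans (hM x hx)
          · exact hM x hx
          · exact ContinuousLinearMap.le_opNorm _ _
      _ ≤ M * ((L * ‖x - y‖) * δ) := by
          have hM0 : (0:ℝ) ≤ M := (norm_nonneg _).trans (hM x hx)
          have h2 : ‖(Φ' x : X →L[ℝ] Y) - (Φ' y : X →L[ℝ] Y)‖ * ‖(Φ' y).symm (Φ x₀)‖
              ≤ (L * ‖x - y‖) * δ := by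
            apply mul_le_mul (hlip x hx y hy) (hsmall y hy) (norm_nonneg _)
            exact le_trans (norm_nonneg _) (hlip x hx y hy)
          exact mul_le_mul_of_nonneg_left h2 hM0
      _ ≤ (K : ℝ) * ‖x - y‖ := by
          have : M * ((L * ‖x - y‖) * δ) = (M * L * δ) * ‖x - y‖ := by ring
          rw [this]
          exact mul_le_mul_of_nonneg_right (Real.le_coe_toNNReal _) (norm_nonneg _)
  -- Picard–Lindelöf data
  set δ' : NNReal := ⟨δ, hδ.le⟩ with hδ'
  set t₀ : Set.Icc (0:ℝ) 1 := ⟨0, by constructor <;> norm_num⟩ with ht₀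
  have hPL : IsPicardLindelof (fun _ x => F x) t₀ x₀ δ' 0 δ' K :=
    { lipschitzOnWith := fun t _ => hFlip
      continuousOn := fun x _ => continuousOn_const
      norm_le := fun t _ x hx => by
        show ‖-((Φ' x).symm (Φ x₀))‖ ≤ (δ' : ℝ)
        rw [norm_neg]; exact hsmall x hx
      mul_max_le := by simp [ht₀] }
  obtain ⟨f, hf⟩ := ODE.FunSpace.exists_isFixedPt_next hPL (Metric.mem_closedBall_self (NNReal.coe_nonneg 0))
  set g : ℝ → X := f.compProj with hg
  have hmem : ∀ t : ℝ, g t ∈ Metric.closedBall x₀ δ := fun t =>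
    f.compProj_mem_closedBall hPL.mul_max_le
  have hg0 : g 0 = x₀ := by
    show f.compProj (t₀ : ℝ) = x₀
    rw [f.compProj_val (t := t₀), ← hf, ODE.FunSpace.next_apply₀]
  have hgderiv : ∀ t ∈ Set.Icc (0:ℝ) 1,
      HasDerivWithinAt g (F (g t)) (Set.Icc (0:ℝ) 1) t := by
    intro t ht
    apply ODE.hasDerivWithinAt_picard_Icc t₀.2 hPL.continuousOn_uncurry
      f.continuous_compProj.continuousOn (fun _ ht' ↦ f.compProj_mem_closedBall hPL.mul_max_le)
      x₀ ht |>.congr_of_mem _ ht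
    intro t' ht'
    show f.compProj t' = _
    nth_rw 1 [← hf]
    rw [ODE.FunSpace.compProj_of_mem ht', ODE.FunSpace.next_apply]
  -- The function h t = Φ (g t) + t • Φ x₀ has zero derivative
  set h : ℝ → Y := fun t => Φ (g t) + t • Φ x₀ with hh
  have hhderiv : ∀ t ∈ Set.Icc (0:ℝ) 1,
      HasDerivWithinAt h 0 (Set.Icc (0:ℝ) 1) t := by
    intro t ht
    have h1 : HasDerivWithinAt (fun s => Φ (g s)) ((Φ' (g t) : X →L[ℝ] Y) (F (g t)))
        (Set.Icc (0:ℝ) 1) t :=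
      (hderiv (g t) (hmem t)).comp_hasDerivWithinAt t (hgderiv t ht)
    have h2 : (Φ' (g t) : X →L[ℝ] Y) (F (g t)) = -(Φ x₀) := by
      simp [hF]
    have h3 : HasDerivWithinAt (fun s : ℝ => s • Φ x₀) (Φ x₀) (Set.Icc (0:ℝ) 1) t := by
      simpa using ((hasDerivAt_id t).smul_const (Φ x₀)).hasDerivWithinAt
    have := (h1.add h3)
    rw [h2] at this
    simpa using (show HasDerivWithinAt h (-(Φ x₀) + Φ x₀) (Set.Icc (0:ℝ) 1) t from this)
  have hconst : h 1 = h 0 := by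
    have hb := (convex_Icc (0:ℝ) 1).norm_image_sub_le_of_norm_hasDerivWithin_le
      (C := 0) (f' := fun _ => (0:Y)) hhderiv (fun x _ => by simp)
      (Set.mem_Icc.mpr ⟨le_refl 0, zero_le_one⟩) (Set.mem_Icc.mpr ⟨zero_le_one, le_refl 1⟩)
    rw [zero_mul] at hb
    have : h 1 - h 0 = 0 := norm_le_zero_iff.mp hb
    exact sub_eq_zero.mp this
  have hzero : Φ (g 1) = 0 := by
    have h1 : h 1 = Φ (g 1) + Φ x₀ := by simp [hh]
    have h0 : h 0 = Φ x₀ := by simp [hh, hg0]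
    have := hconst
    rw [h1, h0] at this
    have := add_right_cancel (b := Φ x₀) (by simpa using this : Φ (g 1) + Φ x₀ = 0 + Φ x₀)
    simpa using this
  exact ⟨g 1, hmem 1, hzero⟩
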